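/- Projected gradient descent solves US problems globally: let 𝒦 ⊆ ℝ^{mN×pN} be a linear subspace with K·G nilpotent for every K ∈ 𝒦, and suppose the problem min_{K ∈ 𝒦} J(K) is uniquely stationary (every stationary point is a global minimizer). Then for any K₀ ∈ 𝒦 there exists a sequence of positive step sizes (η_t)_{t≥0} such that the iterates K_{t+1} = K_t − η_t·Π_𝒦(∇J(K_t)) satisfy K_t ∈ 𝒦 for every t and lim_{t→∞} J(K_t) = inf{J(K) : K ∈ 𝒦}. -/

import Mathlib

open Matrix

noncomputable section

/-- Squared Frobenius norm of a real matrix. -/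
def frobSq {a b : Type*} [Fintype a] [Fintype b] (A : Matrix a b ℝ) : ℝ :=
  ∑ i, ∑ j, (A i j) ^ 2

/-- Squared Euclidean norm of a real vector. -/
def vecSq {a : Type*} [Fintype a] (v : a → ℝ) : ℝ :=
  ∑ i, (v i) ^ 2

/-- The finite-horizon LQG cost `J(K)` of the paper, written in terms of the
square roots `Msq = M^{1/2}`, `Swsq = Σw^{1/2}`, `Rsq = R^{1/2}`, `Svsq = Σv^{1/2}`. -/
def Jcost {nn mm pp : ℕ}
    (P11 : Matrix (Fin nn) (Fin nn) ℝ) (P12 : Matrix (Fin nn) (Fin mm) ℝ)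
    (C : Matrix (Fin pp) (Fin nn) ℝ)
    (Msq Swsq : Matrix (Fin nn) (Fin nn) ℝ)
    (Rsq : Matrix (Fin mm) (Fin mm) ℝ) (Svsq : Matrix (Fin pp) (Fin pp) ℝ)
    (μ : Fin nn → ℝ) (K : Matrix (Fin mm) (Fin pp) ℝ) : ℝ :=
  frobSq (Msq * (1 - P12 * K * C)⁻¹ * P11 * Swsq)
  + frobSq (Msq * P12 * K * (1 - C * P12 * K)⁻¹ * Svsq)
  + frobSq (Rsq * K * (1 - C * P12 * K)⁻¹ * C * P11 * Swsq)
  + frobSq (Rsq * K * (1 - C * P12 * K)⁻¹ * Svsq)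
  + vecSq ((Msq * (1 - P12 * K * C)⁻¹ * P11).mulVec μ)
  + vecSq ((Rsq * K * (1 - C * P12 * K)⁻¹ * C * P11).mulVec μ)

/-- The disturbance-feedback cost `J̃(Q)` of the paper, written in terms of the
square roots `Msq = M^{1/2}`, `Swsq = Σw^{1/2}`, `Rsq = R^{1/2}`, `Svsq = Σv^{1/2}`. -/
def Jtilde {nn mm pp : ℕ}
    (P11 : Matrix (Fin nn) (Fin nn) ℝ) (P12 : Matrix (Fin nn) (Fin mm) ℝ)
    (C : Matrix (Fin pp) (Fin nn) ℝ)
    (Msq Swsq : Matrix (Fin nn) (Fin nn) ℝ)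
    (Rsq : Matrix (Fin mm) (Fin mm) ℝ) (Svsq : Matrix (Fin pp) (Fin pp) ℝ)
    (μ : Fin nn → ℝ) (Q : Matrix (Fin mm) (Fin pp) ℝ) : ℝ :=
  frobSq (Msq * (1 + P12 * Q * C) * P11 * Swsq)
  + frobSq (Msq * P12 * Q * Svsq)
  + frobSq (Rsq * Q * C * P11 * Swsq)
  + frobSq (Rsq * Q * Svsq)
  + vecSq ((Rsq * Q * C * P11).mulVec μ)
  + vecSq ((Msq * (1 + P12 * Q * C) * P11).mulVec μ)

end

noncomputable section

open scoped ComplexOrder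

/-- The square root of a positive semidefinite matrix, as `Matrix.PosSemidef.sqrt` was defined
in Mathlib (December 2024); it has since been removed from Mathlib. -/
def Matrix.PosSemidef.sqrt {n : Type*} [Fintype n] [DecidableEq n] {𝕜 : Type*} [RCLike 𝕜]
    {A : Matrix n n 𝕜} (hA : A.PosSemidef) : Matrix n n 𝕜 :=
  (hA.1.eigenvectorUnitary : Matrix n n 𝕜) *
    diagonal (((↑) : ℝ → 𝕜) ∘ (√·) ∘ hA.1.eigenvalues) *
    (star hA.1.eigenvectorUnitary : Matrix n n 𝕜)

end

noncomputable section

/-- The gradient `∇J(K)` of the LQG cost with respect to the Frobenius inner product: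
the matrix of partial derivatives `∂J/∂K_{ij}`. -/
def gradJ {nn mm pp : ℕ}
    (P11 : Matrix (Fin nn) (Fin nn) ℝ) (P12 : Matrix (Fin nn) (Fin mm) ℝ)
    (C : Matrix (Fin pp) (Fin nn) ℝ)
    (Msq Swsq : Matrix (Fin nn) (Fin nn) ℝ)
    (Rsq : Matrix (Fin mm) (Fin mm) ℝ) (Svsq : Matrix (Fin pp) (Fin pp) ℝ)
    (μ : Fin nn → ℝ) (K : Matrix (Fin mm) (Fin pp) ℝ) : Matrix (Fin mm) (Fin pp) ℝ :=
  Matrix.of fun i j =>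
    deriv (fun t : ℝ =>
      Jcost P11 P12 C Msq Swsq Rsq Svsq μ (K + t • Matrix.single i j (1 : ℝ))) 0

end

lemma posDef_sqrt_det_isUnit {a : ℕ} {A : Matrix (Fin a) (Fin a) ℝ} (hA : A.PosDef) :
    IsUnit hA.posSemidef.sqrt.det := by
  unfold Matrix.PosSemidef.sqrt
  rw [det_mul, det_mul, det_diagonal, mul_comm, ← mul_assoc, ← det_mul,
    Unitary.star_mul_self_of_mem (Subtype.property _), det_one, one_mul]
  refine isUnit_iff_ne_zero.mpr (Finset.prod_ne_zero_iff.mpr fun i _ => ?_)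
  have := hA.eigenvalues_pos i
  simp only [Function.comp_apply]
  exact_mod_cast (Real.sqrt_pos.mpr this).ne'

section Toolkit
attribute [local instance] Matrix.normedAddCommGroup Matrix.normedSpace

noncomputable section
variable {a b c : ℕ} {X : Type*} [NormedAddCommGroup X] [NormedSpace ℝ X]

lemma contDiffAt_matrix_iff {f : X → Matrix (Fin a) (Fin b) ℝ} {x : X} {n : ℕ∞} :
    ContDiffAt ℝ n f x ↔ ∀ i j, ContDiffAt ℝ n (fun x => f x i j) x := by
  erw [contDiffAt_pi]
  constructor
  · intro h i j
    exact (contDiffAt_pi.mp (h i)) j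
  · intro h i
    exact contDiffAt_pi.mpr (h i)

lemma ContDiffAt.matrixMul {f : X → Matrix (Fin a) (Fin b) ℝ} {g : X → Matrix (Fin b) (Fin c) ℝ}
    {x : X} {n : ℕ∞} (hf : ContDiffAt ℝ n f x) (hg : ContDiffAt ℝ n g x) :
    ContDiffAt ℝ n (fun x => f x * g x) x := by
  rw [contDiffAt_matrix_iff]
  intro i j
  have : (fun x => (f x * g x) i j) = fun x => ∑ k, f x i k * g x k j := by
    ext x; simp [Matrix.mul_apply]
  rw [this]
  exact ContDiffAt.sum fun k _ =>
    ((contDiffAt_matrix_iff.mp hf i k).mul (contDiffAt_matrix_iff.mp hg k j))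

lemma ContDiffAt.matrixDet {f : X → Matrix (Fin a) (Fin a) ℝ} {x : X} {n : ℕ∞}
    (hf : ContDiffAt ℝ n f x) : ContDiffAt ℝ n (fun x => (f x).det) x := by
  have : (fun x => (f x).det) = fun x => ∑ σ : Equiv.Perm (Fin a),
      (Equiv.Perm.sign σ : ℤ) * ∏ i, f x (σ i) i := by
    ext x; rw [Matrix.det_apply']
  rw [this]
  refine ContDiffAt.sum fun σ _ => ContDiffAt.mul contDiffAt_const ?_
  exact contDiffAt_prod fun i _ => contDiffAt_matrix_iff.mp hf (σ i) i

lemma ContDiffAt.matrixUpdateRow {f : X → Matrix (Fin a) (Fin b) ℝ} {x : X} {n : ℕ∞}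
    (hf : ContDiffAt ℝ n f x) (j : Fin a) (r : Fin b → ℝ) :
    ContDiffAt ℝ n (fun x => (f x).updateRow j r) x := by
  rw [contDiffAt_matrix_iff]
  intro i k
  by_cases h : i = j
  · subst h
    simp only [Matrix.updateRow_self]
    exact contDiffAt_const
  · simp only [Matrix.updateRow_ne h]
    exact contDiffAt_matrix_iff.mp hf i k

lemma ContDiffAt.matrixAdjugate {f : X → Matrix (Fin a) (Fin a) ℝ} {x : X} {n : ℕ∞}
    (hf : ContDiffAt ℝ n f x) : ContDiffAt ℝ n (fun x => (f x).adjugate) x := by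
  rw [contDiffAt_matrix_iff]
  intro i j
  simp only [Matrix.adjugate_apply]
  exact (hf.matrixUpdateRow j (Pi.single i 1)).matrixDet

lemma ContDiffAt.matrixInv {f : X → Matrix (Fin a) (Fin a) ℝ} {x : X} {n : ℕ∞}
    (hf : ContDiffAt ℝ n f x) (hdet : (f x).det ≠ 0) :
    ContDiffAt ℝ n (fun x => (f x)⁻¹) x := by
  have : (fun x => (f x)⁻¹) = fun x => ((f x).det)⁻¹ • (f x).adjugate := by
    ext x i j
    rw [Matrix.inv_def, Ring.inverse_eq_inv']
  rw [this]
  exact (hf.matrixDet.inv hdet).smul hf.matrixAdjugate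

lemma ContDiffAt.frobSqComp {f : X → Matrix (Fin a) (Fin b) ℝ} {x : X} {n : ℕ∞}
    (hf : ContDiffAt ℝ n f x) : ContDiffAt ℝ n (fun x => _root_.frobSq (f x)) x := by
  have : (fun x => _root_.frobSq (f x)) = fun x => ∑ i, ∑ j, (f x i j) ^ 2 := rfl
  rw [this]
  exact ContDiffAt.sum fun i _ => ContDiffAt.sum fun j _ =>
    (contDiffAt_matrix_iff.mp hf i j).pow 2

lemma ContDiffAt.vecSqMulVec {f : X → Matrix (Fin a) (Fin b) ℝ} {x : X} {n : ℕ∞}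
    (μ : Fin b → ℝ) (hf : ContDiffAt ℝ n f x) :
    ContDiffAt ℝ n (fun x => vecSq ((f x).mulVec μ)) x := by
  have : (fun x => vecSq ((f x).mulVec μ)) = fun x => ∑ i, (∑ j, f x i j * μ j) ^ 2 := by
    ext x; simp [vecSq, Matrix.mulVec, dotProduct]
  rw [this]
  exact ContDiffAt.sum fun i _ =>
    (ContDiffAt.sum fun j _ => (contDiffAt_matrix_iff.mp hf i j).mul contDiffAt_const).pow 2

lemma contDiffAt_Jcost {nn mm pp : ℕ}
    (P11 : Matrix (Fin nn) (Fin nn) ℝ) (P12 : Matrix (Fin nn) (Fin mm) ℝ)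
    (C : Matrix (Fin pp) (Fin nn) ℝ)
    (Msq Swsq : Matrix (Fin nn) (Fin nn) ℝ)
    (Rsq : Matrix (Fin mm) (Fin mm) ℝ) (Svsq : Matrix (Fin pp) (Fin pp) ℝ)
    (μ : Fin nn → ℝ) {K : Matrix (Fin mm) (Fin pp) ℝ} {n : ℕ∞}
    (h1 : ((1 : Matrix (Fin nn) (Fin nn) ℝ) - P12 * K * C).det ≠ 0)
    (h2 : ((1 : Matrix (Fin pp) (Fin pp) ℝ) - C * P12 * K).det ≠ 0) :
    ContDiffAt ℝ n (Jcost P11 P12 C Msq Swsq Rsq Svsq μ) K := by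
  have hid : ContDiffAt ℝ n (fun K : Matrix (Fin mm) (Fin pp) ℝ => K) K := contDiffAt_id
  have hc : ∀ {d e : ℕ} (A : Matrix (Fin d) (Fin e) ℝ),
      ContDiffAt ℝ n (fun _ : Matrix (Fin mm) (Fin pp) ℝ => A) K := fun A => contDiffAt_const
  have hA : ContDiffAt ℝ n
      (fun K : Matrix (Fin mm) (Fin pp) ℝ => ((1 : Matrix (Fin nn) (Fin nn) ℝ) - P12 * K * C)) K :=
    (hc 1).sub (((hc P12).matrixMul hid).matrixMul (hc C))
  have hB : ContDiffAt ℝ n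
      (fun K : Matrix (Fin mm) (Fin pp) ℝ => ((1 : Matrix (Fin pp) (Fin pp) ℝ) - C * P12 * K)) K :=
    (hc 1).sub (((hc C).matrixMul (hc P12)).matrixMul hid)
  have hAi := hA.matrixInv h1
  have hBi := hB.matrixInv h2
  have hJ : Jcost P11 P12 C Msq Swsq Rsq Svsq μ = fun K =>
      frobSq (Msq * (1 - P12 * K * C)⁻¹ * P11 * Swsq)
      + frobSq (Msq * P12 * K * (1 - C * P12 * K)⁻¹ * Svsq)
      + frobSq (Rsq * K * (1 - C * P12 * K)⁻¹ * C * P11 * Swsq)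
      + frobSq (Rsq * K * (1 - C * P12 * K)⁻¹ * Svsq)
      + vecSq ((Msq * (1 - P12 * K * C)⁻¹ * P11).mulVec μ)
      + vecSq ((Rsq * K * (1 - C * P12 * K)⁻¹ * C * P11).mulVec μ) := rfl
  rw [hJ]
  refine ContDiffAt.add (ContDiffAt.add (ContDiffAt.add (ContDiffAt.add (ContDiffAt.add
    ?_ ?_) ?_) ?_) ?_) ?_
  · exact ContDiffAt.frobSqComp ((((hc Msq).matrixMul hAi).matrixMul (hc P11)).matrixMul (hc Swsq))
  · exact ContDiffAt.frobSqComp ((((hc Msq).matrixMul (hc P12)).matrixMul hid).matrixMul hBi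
      |>.matrixMul (hc Svsq))
  · exact ContDiffAt.frobSqComp (((((hc Rsq).matrixMul hid).matrixMul hBi).matrixMul (hc C)
      |>.matrixMul (hc P11)).matrixMul (hc Swsq))
  · exact ContDiffAt.frobSqComp ((((hc Rsq).matrixMul hid).matrixMul hBi).matrixMul (hc Svsq))
  · exact ContDiffAt.vecSqMulVec μ (((hc Msq).matrixMul hAi).matrixMul (hc P11))
  · exact ContDiffAt.vecSqMulVec μ ((((hc Rsq).matrixMul hid).matrixMul hBi).matrixMul (hc C)
      |>.matrixMul (hc P11))

end
end Toolkit
section Recon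
open Matrix

variable {mm pp : ℕ}

lemma det_one_sub_ne_zero' {a : ℕ} {X : Matrix (Fin a) (Fin a) ℝ} (h : IsNilpotent X) :
    ((1 : Matrix (Fin a) (Fin a) ℝ) - X).det ≠ 0 :=
  isUnit_iff_ne_zero.mp ((Matrix.isUnit_iff_isUnit_det _).mp h.isUnit_one_sub)

lemma isNilpotent_swap' {a b : ℕ} {A : Matrix (Fin a) (Fin b) ℝ} {B : Matrix (Fin b) (Fin a) ℝ}
    (h : IsNilpotent (A * B)) : IsNilpotent (B * A) := by
  obtain ⟨k, hk⟩ := h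
  refine ⟨k + 1, ?_⟩
  have aux : ∀ k, (B * A) ^ (k + 1) = B * (A * B) ^ k * A := by
    intro k
    induction k with
    | zero => simp
    | succ k ih =>
      rw [pow_succ, ih, pow_succ]
      simp only [Matrix.mul_assoc]
  rw [aux, hk]
  simp

lemma pow_card_eq_zero_of_isNilpotent' {a : ℕ} {M : Matrix (Fin a) (Fin a) ℝ}
    (h : IsNilpotent M) : M ^ a = 0 := by
  have h2 := Matrix.isNilpotent_charpoly_sub_pow_of_isNilpotent h
  have h3 : M.charpoly - Polynomial.X ^ (Fintype.card (Fin a)) = 0 := h2.eq_zero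
  rw [sub_eq_zero] at h3
  have h4 := M.aeval_self_charpoly
  rw [h3] at h4
  simpa [Fintype.card_fin] using h4

lemma commute_nonsing_inv_one_sub' {a : ℕ} {Y : Matrix (Fin a) (Fin a) ℝ} (h : IsNilpotent Y) :
    Y * (1 - Y)⁻¹ = (1 - Y)⁻¹ * Y := by
  have hu : IsUnit ((1 : Matrix (Fin a) (Fin a) ℝ) - Y).det :=
    (Matrix.isUnit_iff_isUnit_det _).mp h.isUnit_one_sub
  have h1 : Y * (1 - Y) = (1 - Y) * Y := by noncomm_ring
  calc Y * (1 - Y)⁻¹ = ((1 - Y)⁻¹ * (1 - Y)) * (Y * (1 - Y)⁻¹) := by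
        rw [Matrix.nonsing_inv_mul _ hu, Matrix.one_mul]
    _ = (1 - Y)⁻¹ * (((1 - Y) * Y) * (1 - Y)⁻¹) := by simp only [Matrix.mul_assoc]
    _ = (1 - Y)⁻¹ * ((Y * (1 - Y)) * (1 - Y)⁻¹) := by rw [← h1]
    _ = (1 - Y)⁻¹ * Y := by
        rw [Matrix.mul_assoc, Matrix.mul_nonsing_inv _ hu, Matrix.mul_one]

lemma key_recon (G : Matrix (Fin pp) (Fin mm) ℝ) (K : Matrix (Fin mm) (Fin pp) ℝ)
    (hn : IsNilpotent (K * G)) :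
    (∑ i ∈ Finset.range mm, (-(K * (1 - G * K)⁻¹ * G)) ^ i) * (K * (1 - G * K)⁻¹) = K := by
  have hGK : IsNilpotent (G * K) := isNilpotent_swap' hn
  have huA : IsUnit ((1 : Matrix (Fin pp) (Fin pp) ℝ) - G * K).det :=
    (Matrix.isUnit_iff_isUnit_det _).mp hGK.isUnit_one_sub
  have huB : IsUnit ((1 : Matrix (Fin mm) (Fin mm) ℝ) - K * G).det :=
    (Matrix.isUnit_iff_isUnit_det _).mp hn.isUnit_one_sub
  set Q : Matrix (Fin mm) (Fin pp) ℝ := K * (1 - G * K)⁻¹ with hQ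
  -- push-through identity
  have h0 : G * ((1 : Matrix (Fin mm) (Fin mm) ℝ) - K * G) =
      ((1 : Matrix (Fin pp) (Fin pp) ℝ) - G * K) * G := by
    rw [Matrix.mul_sub, Matrix.sub_mul, Matrix.mul_one, Matrix.one_mul, Matrix.mul_assoc]
  have hpush : ((1 : Matrix (Fin pp) (Fin pp) ℝ) - G * K)⁻¹ * G =
      G * ((1 : Matrix (Fin mm) (Fin mm) ℝ) - K * G)⁻¹ := by
    calc (1 - G * K)⁻¹ * G
        = (1 - G * K)⁻¹ * (G * ((1 - K * G) * (1 - K * G)⁻¹)) := by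
          rw [Matrix.mul_nonsing_inv _ huB, Matrix.mul_one]
      _ = (1 - G * K)⁻¹ * ((G * (1 - K * G)) * (1 - K * G)⁻¹) := by
          simp only [Matrix.mul_assoc]
      _ = (1 - G * K)⁻¹ * (((1 - G * K) * G) * (1 - K * G)⁻¹) := by rw [h0]
      _ = ((1 - G * K)⁻¹ * (1 - G * K)) * (G * (1 - K * G)⁻¹) := by
          simp only [Matrix.mul_assoc]
      _ = G * (1 - K * G)⁻¹ := by rw [Matrix.nonsing_inv_mul _ huA, Matrix.one_mul]
  have hQG : Q * G = (K * G) * ((1 : Matrix (Fin mm) (Fin mm) ℝ) - K * G)⁻¹ := by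
    rw [hQ, Matrix.mul_assoc, hpush, ← Matrix.mul_assoc]
  have hnQG : IsNilpotent (Q * G) := by
    rw [hQG]
    have hcomm : Commute (K * G) ((1 : Matrix (Fin mm) (Fin mm) ℝ) - K * G)⁻¹ :=
      commute_nonsing_inv_one_sub' hn
    obtain ⟨k, hk⟩ := hn
    refine ⟨k, ?_⟩
    rw [hcomm.mul_pow, hk, zero_mul]
  have hpow : (Q * G) ^ mm = 0 := pow_card_eq_zero_of_isNilpotent' hnQG
  -- (1 + Q*G) * K = Q
  have hQGK : Q * (G * K) = Q - K := by
    have : G * K = 1 - ((1 : Matrix (Fin pp) (Fin pp) ℝ) - G * K) := by abel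
    rw [this, Matrix.mul_sub, Matrix.mul_one, hQ, Matrix.mul_assoc,
      Matrix.nonsing_inv_mul _ huA, Matrix.mul_one]
  have hstep4 : ((1 : Matrix (Fin mm) (Fin mm) ℝ) + Q * G) * K = Q := by
    rw [Matrix.add_mul, Matrix.one_mul, Matrix.mul_assoc, hQGK]
    abel
  -- geometric series
  have hgeom : (∑ i ∈ Finset.range mm, (-(Q * G)) ^ i) *
      ((1 : Matrix (Fin mm) (Fin mm) ℝ) + Q * G) = 1 := by
    have h5 := geom_sum_mul (-(Q * G)) mm
    rw [neg_pow, hpow, mul_zero] at h5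
    have h7 : -(Q * G) - 1 = -((1 : Matrix (Fin mm) (Fin mm) ℝ) + Q * G) := by abel
    rw [h7, mul_neg, neg_eq_iff_eq_neg] at h5
    simpa using h5
  calc (∑ i ∈ Finset.range mm, (-(Q * G)) ^ i) * Q
      = (∑ i ∈ Finset.range mm, (-(Q * G)) ^ i) * (((1 : Matrix (Fin mm) (Fin mm) ℝ) + Q * G) * K) := by
        rw [hstep4]
    _ = ((∑ i ∈ Finset.range mm, (-(Q * G)) ^ i) * ((1 : Matrix (Fin mm) (Fin mm) ℝ) + Q * G)) * K :=
        (Matrix.mul_assoc _ _ _).symm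
    _ = K := by rw [hgeom, Matrix.one_mul]
end Recon

section Nonneg

lemma frobSq_nonneg {a b : Type*} [Fintype a] [Fintype b] (A : Matrix a b ℝ) : 0 ≤ frobSq A :=
  Finset.sum_nonneg fun _ _ => Finset.sum_nonneg fun _ _ => sq_nonneg _

lemma vecSq_nonneg {a : Type*} [Fintype a] (v : a → ℝ) : 0 ≤ vecSq v :=
  Finset.sum_nonneg fun _ _ => sq_nonneg _

lemma Jcost_nonneg {nn mm pp : ℕ}
    (P11 : Matrix (Fin nn) (Fin nn) ℝ) (P12 : Matrix (Fin nn) (Fin mm) ℝ)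
    (C : Matrix (Fin pp) (Fin nn) ℝ)
    (Msq Swsq : Matrix (Fin nn) (Fin nn) ℝ)
    (Rsq : Matrix (Fin mm) (Fin mm) ℝ) (Svsq : Matrix (Fin pp) (Fin pp) ℝ)
    (μ : Fin nn → ℝ) (K : Matrix (Fin mm) (Fin pp) ℝ) :
    0 ≤ Jcost P11 P12 C Msq Swsq Rsq Svsq μ K := by
  unfold Jcost
  have h1 := frobSq_nonneg (Msq * (1 - P12 * K * C)⁻¹ * P11 * Swsq)
  have h2 := frobSq_nonneg (Msq * P12 * K * (1 - C * P12 * K)⁻¹ * Svsq)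
  have h3 := frobSq_nonneg (Rsq * K * (1 - C * P12 * K)⁻¹ * C * P11 * Swsq)
  have h4 := frobSq_nonneg (Rsq * K * (1 - C * P12 * K)⁻¹ * Svsq)
  have h5 := vecSq_nonneg ((Msq * (1 - P12 * K * C)⁻¹ * P11).mulVec μ)
  have h6 := vecSq_nonneg ((Rsq * K * (1 - C * P12 * K)⁻¹ * C * P11).mulVec μ)
  linarith

lemma term4_le {nn mm pp : ℕ}
    (P11 : Matrix (Fin nn) (Fin nn) ℝ) (P12 : Matrix (Fin nn) (Fin mm) ℝ)
    (C : Matrix (Fin pp) (Fin nn) ℝ)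
    (Msq Swsq : Matrix (Fin nn) (Fin nn) ℝ)
    (Rsq : Matrix (Fin mm) (Fin mm) ℝ) (Svsq : Matrix (Fin pp) (Fin pp) ℝ)
    (μ : Fin nn → ℝ) (K : Matrix (Fin mm) (Fin pp) ℝ) {c : ℝ}
    (h : Jcost P11 P12 C Msq Swsq Rsq Svsq μ K ≤ c) :
    frobSq (Rsq * K * (1 - C * P12 * K)⁻¹ * Svsq) ≤ c := by
  unfold Jcost at h
  have h1 := frobSq_nonneg (Msq * (1 - P12 * K * C)⁻¹ * P11 * Swsq)
  have h2 := frobSq_nonneg (Msq * P12 * K * (1 - C * P12 * K)⁻¹ * Svsq)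
  have h3 := frobSq_nonneg (Rsq * K * (1 - C * P12 * K)⁻¹ * C * P11 * Swsq)
  have h5 := vecSq_nonneg ((Msq * (1 - P12 * K * C)⁻¹ * P11).mulVec μ)
  have h6 := vecSq_nonneg ((Rsq * K * (1 - C * P12 * K)⁻¹ * C * P11).mulVec μ)
  linarith

end Nonneg

section Coercive
attribute [local instance] Matrix.normedAddCommGroup Matrix.normedSpace

lemma norm_le_sqrt_of_frobSq_le {a b : ℕ} {A : Matrix (Fin a) (Fin b) ℝ} {c : ℝ}
    (h : frobSq A ≤ c) : ‖A‖ ≤ Real.sqrt c := by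
  rw [Matrix.norm_le_iff (Real.sqrt_nonneg c)]
  intro i
  intro j
  have h1 : (A i j) ^ 2 ≤ ∑ j', (A i j') ^ 2 :=
    Finset.single_le_sum (f := fun j' => (A i j') ^ 2) (fun _ _ => sq_nonneg _)
      (Finset.mem_univ j)
  have h2 : ∑ j', (A i j') ^ 2 ≤ frobSq A :=
    Finset.single_le_sum (f := fun i => ∑ j', (A i j') ^ 2)
      (fun _ _ => Finset.sum_nonneg fun _ _ => sq_nonneg _) (Finset.mem_univ i)
  have := Real.sqrt_le_sqrt (le_trans h1 (le_trans h2 h))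
  rw [Real.sqrt_sq_eq_abs] at this
  simpa [Real.norm_eq_abs] using this

lemma isCompact_sublevel {nn mm pp : ℕ}
    (P11 : Matrix (Fin nn) (Fin nn) ℝ) (P12 : Matrix (Fin nn) (Fin mm) ℝ)
    (C : Matrix (Fin pp) (Fin nn) ℝ)
    (Msq Swsq : Matrix (Fin nn) (Fin nn) ℝ)
    (Rsq : Matrix (Fin mm) (Fin mm) ℝ) (Svsq : Matrix (Fin pp) (Fin pp) ℝ)
    (μ : Fin nn → ℝ)
    (hRdet : IsUnit Rsq.det) (hSdet : IsUnit Svsq.det)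
    (𝒦 : Submodule ℝ (Matrix (Fin mm) (Fin pp) ℝ))
    (hnilp : ∀ K ∈ 𝒦, IsNilpotent (K * (C * P12))) (c : ℝ) :
    IsCompact {K : Matrix (Fin mm) (Fin pp) ℝ | K ∈ 𝒦 ∧
      Jcost P11 P12 C Msq Swsq Rsq Svsq μ K ≤ c} := by
  set f := Jcost P11 P12 C Msq Swsq Rsq Svsq μ with hf
  -- determinant conditions on 𝒦
  have hdet : ∀ K ∈ 𝒦, ((1 : Matrix (Fin nn) (Fin nn) ℝ) - P12 * K * C).det ≠ 0 ∧
      ((1 : Matrix (Fin pp) (Fin pp) ℝ) - C * P12 * K).det ≠ 0 := by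
    intro K hK
    have h1 : IsNilpotent ((K * C) * P12) := by
      have := hnilp K hK
      rwa [← Matrix.mul_assoc] at this
    constructor
    · have h2 : IsNilpotent (P12 * (K * C)) := isNilpotent_swap' h1
      rw [← Matrix.mul_assoc] at h2
      exact det_one_sub_ne_zero' h2
    · have h2 : IsNilpotent ((C * P12) * K) := isNilpotent_swap' (hnilp K hK)
      exact det_one_sub_ne_zero' h2
  have hcont : ∀ K ∈ 𝒦, ContinuousAt f K := by
    intro K hK
    exact (contDiffAt_Jcost P11 P12 C Msq Swsq Rsq Svsq μ (n := 1)
      (hdet K hK).1 (hdet K hK).2).continuousAt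
  have hKclosed : IsClosed (𝒦 : Set (Matrix (Fin mm) (Fin pp) ℝ)) :=
    Submodule.closed_of_finiteDimensional 𝒦
  have hclosed : IsClosed {K : Matrix (Fin mm) (Fin pp) ℝ | K ∈ 𝒦 ∧ f K ≤ c} := by
    haveI : SequentialSpace (Matrix (Fin mm) (Fin pp) ℝ) :=
      inferInstanceAs (SequentialSpace (Fin mm → Fin pp → ℝ))
    apply IsSeqClosed.isClosed
    intro u x hu hux
    have hx𝒦 : x ∈ 𝒦 := hKclosed.mem_of_tendsto hux (Filter.Eventually.of_forall fun n => (hu n).1)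
    refine ⟨hx𝒦, ?_⟩
    exact le_of_tendsto ((hcont x hx𝒦).tendsto.comp hux)
      (Filter.Eventually.of_forall fun n => (hu n).2)
  by_cases hc : 0 ≤ c
  · -- main case
    set ℓ : Matrix (Fin mm) (Fin pp) ℝ → Matrix (Fin mm) (Fin pp) ℝ :=
      fun X => Rsq⁻¹ * X * Svsq⁻¹ with hℓ
    set ψ : Matrix (Fin mm) (Fin pp) ℝ → Matrix (Fin mm) (Fin pp) ℝ :=
      fun Q => (∑ i ∈ Finset.range mm, (-(Q * (C * P12))) ^ i) * Q with hψ
    have hℓcont : Continuous ℓ :=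
      (continuous_const.matrix_mul continuous_id).matrix_mul continuous_const
    have hψcont : Continuous ψ := by
      refine Continuous.matrix_mul ?_ continuous_id
      refine continuous_finset_sum _ fun i _ => ?_
      exact (continuous_pow i).comp ((continuous_id.matrix_mul continuous_const).neg)
    have hball : IsCompact (Metric.closedBall (0 : Matrix (Fin mm) (Fin pp) ℝ) (Real.sqrt c)) :=
      isCompact_closedBall _ _
    have himg : IsCompact ((fun X => ψ (ℓ X)) '' Metric.closedBall 0 (Real.sqrt c)) :=
      hball.image (hψcont.comp hℓcont)
    refine himg.of_isClosed_subset hclosed ?_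
    intro K hK
    obtain ⟨hK𝒦, hJle⟩ := hK
    have hnil : IsNilpotent (K * (C * P12)) := hnilp K hK𝒦
    set X := Rsq * K * (1 - C * P12 * K)⁻¹ * Svsq with hX
    have hXball : X ∈ Metric.closedBall (0 : Matrix (Fin mm) (Fin pp) ℝ) (Real.sqrt c) := by
      rw [Metric.mem_closedBall, dist_zero_right]
      exact norm_le_sqrt_of_frobSq_le (term4_le P11 P12 C Msq Swsq Rsq Svsq μ K hJle)
    refine ⟨X, hXball, ?_⟩
    show ψ (ℓ X) = K
    have hℓX : ℓ X = K * (1 - C * P12 * K)⁻¹ := by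
      rw [hℓ, hX]
      calc Rsq⁻¹ * (Rsq * K * (1 - C * P12 * K)⁻¹ * Svsq) * Svsq⁻¹
          = (Rsq⁻¹ * Rsq) * (K * (1 - C * P12 * K)⁻¹ * (Svsq * Svsq⁻¹)) := by
            simp only [Matrix.mul_assoc]
        _ = K * (1 - C * P12 * K)⁻¹ := by
            rw [Matrix.nonsing_inv_mul _ hRdet, Matrix.mul_nonsing_inv _ hSdet,
              Matrix.one_mul, Matrix.mul_one]
    rw [hℓX, hψ]
    exact key_recon (C * P12) K hnil
  · -- empty case
    have : {K : Matrix (Fin mm) (Fin pp) ℝ | K ∈ 𝒦 ∧ f K ≤ c} = ∅ := by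
      ext K
      simp only [Set.mem_setOf_eq, Set.mem_empty_iff_false, iff_false, not_and]
      intro _
      have := Jcost_nonneg P11 P12 C Msq Swsq Rsq Svsq μ K
      rw [← hf] at this
      intro hle
      exact hc (le_trans this hle)
    rw [this]
    exact isCompact_empty

end Coercive

section Abstract
attribute [local instance] Matrix.normedAddCommGroup Matrix.normedSpace

open Filter Topology

variable {d e : ℕ}

lemma frobSq_pos_of_ne {D : Matrix (Fin d) (Fin e) ℝ} (hD : D ≠ 0) : 0 < frobSq D := by
  rcases lt_or_eq_of_le (frobSq_nonneg D) with h | h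
  · exact h
  · exfalso
    apply hD
    have h0 : ∑ i, ∑ j, (D i j) ^ 2 = 0 := h.symm
    have h1 : ∀ i ∈ Finset.univ, ∑ j, (D i j) ^ 2 = 0 :=
      (Finset.sum_eq_zero_iff_of_nonneg
        (fun i _ => Finset.sum_nonneg fun j _ => sq_nonneg _)).mp h0
    ext i j
    have h2 : ∀ j' ∈ Finset.univ, (D i j') ^ 2 = 0 :=
      (Finset.sum_eq_zero_iff_of_nonneg (fun j' _ => sq_nonneg _)).mp (h1 i (Finset.mem_univ i))
    have := h2 j (Finset.mem_univ j)
    simpa using pow_eq_zero_iff (n := 2) (by norm_num) |>.mp this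

lemma pgd_abstract
    (f : Matrix (Fin d) (Fin e) ℝ → ℝ)
    (g : Matrix (Fin d) (Fin e) ℝ → Matrix (Fin d) (Fin e) ℝ)
    (𝒦 : Submodule ℝ (Matrix (Fin d) (Fin e) ℝ))
    (U : Set (Matrix (Fin d) (Fin e) ℝ)) (hUopen : IsOpen U)
    (hKU : (𝒦 : Set (Matrix (Fin d) (Fin e) ℝ)) ⊆ U)
    (hsmooth : ∀ K ∈ U, ContDiffAt ℝ 1 f K)
    (hg : ∀ K ∈ U, g K = Matrix.of fun i j => fderiv ℝ f K (Matrix.single i j 1))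
    (hf0 : ∀ K, 0 ≤ f K)
    (hcpt : ∀ c : ℝ, IsCompact {K : Matrix (Fin d) (Fin e) ℝ | K ∈ 𝒦 ∧ f K ≤ c})
    (proj : Matrix (Fin d) (Fin e) ℝ →ₗ[ℝ] Matrix (Fin d) (Fin e) ℝ)
    (hprojmem : ∀ X, proj X ∈ 𝒦)
    (hprojorth : ∀ X, ∀ D ∈ 𝒦, ∑ i, ∑ j, (X - proj X) i j * D i j = 0)
    (hUS : ∀ Kbar ∈ 𝒦, proj (g Kbar) = 0 → ∀ K ∈ 𝒦, f Kbar ≤ f K)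
    (K₀ : Matrix (Fin d) (Fin e) ℝ) (hK₀ : K₀ ∈ 𝒦) :
    ∃ η : ℕ → ℝ, (∀ t, 0 < η t) ∧
      ∀ Kseq : ℕ → Matrix (Fin d) (Fin e) ℝ,
        Kseq 0 = K₀ →
        (∀ t, Kseq (t + 1) = Kseq t - η t • proj (g (Kseq t))) →
        (∀ t, Kseq t ∈ 𝒦) ∧
        Tendsto (fun t => f (Kseq t)) atTop
          (𝓝 (sInf ((fun K => f K) '' (𝒦 : Set (Matrix (Fin d) (Fin e) ℝ))))) := by
  classical
  -- basic facts
  have hfd : ∀ K ∈ 𝒦, DifferentiableAt ℝ f K := fun K hK =>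
    (hsmooth K (hKU hK)).differentiableAt (by norm_num)
  have hfcont : ∀ K ∈ 𝒦, ContinuousAt f K := fun K hK => (hfd K hK).continuousAt
  -- expansion of the derivative via g
  have hexp : ∀ K ∈ 𝒦, ∀ D : Matrix (Fin d) (Fin e) ℝ,
      fderiv ℝ f K D = ∑ i, ∑ j, D i j * g K i j := by
    intro K hK D
    have hgK := hg K (hKU hK)
    conv_lhs => rw [Matrix.matrix_eq_sum_single D]
    rw [map_sum]
    refine Finset.sum_congr rfl fun i _ => ?_
    rw [map_sum]
    refine Finset.sum_congr rfl fun j _ => ?_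
    have h1 : Matrix.single i j (D i j) = D i j • Matrix.single i j (1 : ℝ) := by
      rw [Matrix.smul_single, smul_eq_mul, mul_one]
    rw [h1, ContinuousLinearMap.map_smul, smul_eq_mul, hgK]
    simp [Matrix.of_apply]
  -- inner product with projected gradient
  have hip : ∀ K ∈ 𝒦, fderiv ℝ f K (proj (g K)) = frobSq (proj (g K)) := by
    intro K hK
    have h0 := hprojorth (g K) (proj (g K)) (hprojmem (g K))
    have h1 : ∑ i, ∑ j, g K i j * proj (g K) i j
        = ∑ i, ∑ j, proj (g K) i j * proj (g K) i j := by
      have h2 : ∑ i, ∑ j, (g K i j * proj (g K) i j - proj (g K) i j * proj (g K) i j) = 0 := by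
        rw [← h0]
        refine Finset.sum_congr rfl fun i _ => Finset.sum_congr rfl fun j _ => ?_
        simp [Matrix.sub_apply, sub_mul]
      rw [← sub_eq_zero, ← Finset.sum_sub_distrib]
      rw [← h2]
      refine Finset.sum_congr rfl fun i _ => ?_
      rw [Finset.sum_sub_distrib]
    rw [hexp K hK]
    calc ∑ i, ∑ j, proj (g K) i j * g K i j
        = ∑ i, ∑ j, g K i j * proj (g K) i j := by
          refine Finset.sum_congr rfl fun i _ => Finset.sum_congr rfl fun j _ => mul_comm _ _
      _ = ∑ i, ∑ j, proj (g K) i j * proj (g K) i j := h1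
      _ = frobSq (proj (g K)) := by
          refine Finset.sum_congr rfl fun i _ => Finset.sum_congr rfl fun j _ => (sq _).symm
  -- derivative along the projected direction
  have hdirderiv : ∀ K ∈ 𝒦, HasDerivAt (fun s : ℝ => f (K - s • proj (g K)))
      (-(frobSq (proj (g K)))) 0 := by
    intro K hK
    set D := proj (g K)
    have hline : HasDerivAt (fun s : ℝ => K - s • D) (-D) 0 := by
      have h1 : HasDerivAt (fun s : ℝ => s • D) ((1 : ℝ) • D) 0 :=
        (hasDerivAt_id (0 : ℝ)).smul_const D
      rw [one_smul] at h1
      exact h1.const_sub K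
    have hl : HasFDerivAt f (fderiv ℝ f K) ((fun s : ℝ => K - s • D) 0) := by
      simpa using (hfd K hK).hasFDerivAt
    have hcomp := hl.comp_hasDerivAt 0 hline
    have heq : fderiv ℝ f K (-D) = -(frobSq D) := by
      rw [map_neg, hip K hK]
    erw [heq] at hcomp
    exact hcomp
  -- membership of steps
  have hstep_mem : ∀ K ∈ 𝒦, ∀ s : ℝ, K - s • proj (g K) ∈ 𝒦 := fun K hK s =>
    Submodule.sub_mem 𝒦 hK (Submodule.smul_mem 𝒦 s (hprojmem (g K)))
  have hprojcont : Continuous proj := proj.continuous_of_finiteDimensional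
  -- continuity of the one-dimensional restriction
  have hφcont : ∀ K ∈ 𝒦, Continuous (fun s : ℝ => f (K - s • proj (g K))) := by
    intro K hK
    rw [continuous_iff_continuousAt]
    intro s
    have hinner : Continuous (fun s : ℝ => K - s • proj (g K)) :=
      continuous_const.sub (continuous_id.smul continuous_const)
    exact ContinuousAt.comp (f := fun s : ℝ => K - s • proj (g K))
      (hfcont _ (hstep_mem K hK s)) hinner.continuousAt
  -- strict decrease when the projected gradient is nonzero
  have hstrict : ∀ K ∈ 𝒦, proj (g K) ≠ 0 →
      ∃ s₀ ∈ Set.Icc (0:ℝ) 1, f (K - s₀ • proj (g K)) < f K := by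
    intro K hK hne
    set φ : ℝ → ℝ := fun s => f (K - s • proj (g K)) with hφdef
    have hder := hdirderiv K hK
    have hslope : Tendsto (slope φ 0) (𝓝[>] 0) (𝓝 (-(frobSq (proj (g K))))) :=
      (hasDerivAt_iff_tendsto_slope.mp hder).mono_left
        (nhdsWithin_mono 0 fun x hx => ne_of_gt hx)
    have hneg : -(frobSq (proj (g K))) < 0 := neg_neg_of_pos (frobSq_pos_of_ne hne)
    have h2 : ∀ᶠ s in 𝓝[>] (0:ℝ), slope φ 0 s < 0 := hslope.eventually_lt_const hneg
    have h3 : ∀ᶠ s in 𝓝[>] (0:ℝ), s ∈ Set.Ioc (0:ℝ) 1 :=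
      Ioc_mem_nhdsGT_of_mem ⟨le_refl 0, zero_lt_one⟩
    obtain ⟨s₀, hs₀slope, hs₀mem⟩ := (h2.and h3).exists
    refine ⟨s₀, ⟨le_of_lt hs₀mem.1, hs₀mem.2⟩, ?_⟩
    have h4 : slope φ 0 s₀ = (φ s₀ - φ 0) / s₀ := by
      rw [slope_def_field]
      ring_nf
    rw [h4] at hs₀slope
    have h5 : φ s₀ - φ 0 < 0 := by
      by_contra h6
      push_neg at h6
      exact absurd hs₀slope (not_lt.mpr (div_nonneg h6 (le_of_lt hs₀mem.1)))
    have : φ s₀ < φ 0 := by linarith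
    simpa [hφdef] using this
  -- line search
  have hls : ∀ K ∈ 𝒦, ∃ η ∈ Set.Ioc (0:ℝ) 1,
      ∀ s ∈ Set.Icc (0:ℝ) 1,
        f (K - η • proj (g K)) ≤ f (K - s • proj (g K)) := by
    intro K hK
    by_cases hne : proj (g K) = 0
    · exact ⟨1, ⟨zero_lt_one, le_refl 1⟩, fun s _ => by simp [hne]⟩
    · set φ : ℝ → ℝ := fun s => f (K - s • proj (g K)) with hφdef
      obtain ⟨η, hηmem, hηmin⟩ := isCompact_Icc.exists_isMinOn (Set.nonempty_Icc.mpr zero_le_one)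
        ((hφcont K hK).continuousOn)
      obtain ⟨s₀, hs₀mem, hs₀lt⟩ := hstrict K hK hne
      have hηpos : 0 < η := by
        rcases lt_or_eq_of_le hηmem.1 with h | h
        · exact h
        · exfalso
          have h1 : φ η ≤ φ s₀ := hηmin hs₀mem
          rw [← h] at h1
          have : φ 0 = f K := by simp [hφdef]
          rw [this] at h1
          exact absurd (lt_of_le_of_lt h1 hs₀lt) (lt_irrefl _)
      exact ⟨η, ⟨hηpos, hηmem.2⟩, fun s hs => hηmin hs⟩
  -- the choice of step sizes
  have hex : ∀ K : Matrix (Fin d) (Fin e) ℝ, ∃ η : ℝ, 0 < η ∧ η ≤ 1 ∧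
      (K ∈ 𝒦 → ∀ s ∈ Set.Icc (0:ℝ) 1,
        f (K - η • proj (g K)) ≤ f (K - s • proj (g K))) := by
    intro K
    by_cases hK : K ∈ 𝒦
    · obtain ⟨η, hη1, hη2⟩ := hls K hK
      exact ⟨η, hη1.1, hη1.2, fun _ => hη2⟩
    · exact ⟨1, zero_lt_one, le_refl 1, fun h => absurd h hK⟩
  set pick : Matrix (Fin d) (Fin e) ℝ → ℝ := fun K => Classical.choose (hex K) with hpick
  have hpick1 : ∀ K, 0 < pick K := fun K => (Classical.choose_spec (hex K)).1
  have hpick3 : ∀ K ∈ 𝒦, ∀ s ∈ Set.Icc (0:ℝ) 1,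
      f (K - pick K • proj (g K)) ≤ f (K - s • proj (g K)) := fun K hK =>
    (Classical.choose_spec (hex K)).2.2 hK
  -- the sequence
  set seq : ℕ → Matrix (Fin d) (Fin e) ℝ :=
    fun t => Nat.rec K₀ (fun _ Kt => Kt - pick Kt • proj (g Kt)) t with hseqdef
  have hseq0 : seq 0 = K₀ := rfl
  have hseqS : ∀ t, seq (t + 1) = seq t - pick (seq t) • proj (g (seq t)) := fun t => rfl
  have hmem : ∀ t, seq t ∈ 𝒦 := by
    intro t
    induction t with
    | zero => exact hK₀
    | succ t ih =>
      rw [hseqS]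
      exact hstep_mem _ ih _
  have hdec : ∀ t, f (seq (t + 1)) ≤ f (seq t) := by
    intro t
    rw [hseqS]
    have := hpick3 (seq t) (hmem t) 0 ⟨le_refl 0, zero_le_one⟩
    simpa using this
  have hmono : Antitone fun t => f (seq t) := antitone_nat_of_succ_le hdec
  have hbddrange : BddBelow (Set.range fun t => f (seq t)) :=
    ⟨0, fun x ⟨t, ht⟩ => ht ▸ hf0 (seq t)⟩
  set Jstar := ⨅ t, f (seq t) with hJstar
  have htends : Tendsto (fun t => f (seq t)) atTop (𝓝 Jstar) :=
    tendsto_atTop_ciInf hmono hbddrange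
  have hJle : ∀ t, Jstar ≤ f (seq t) := fun t => ciInf_le hbddrange t
  -- accumulation point
  have hin : ∀ t, seq t ∈ {K : Matrix (Fin d) (Fin e) ℝ | K ∈ 𝒦 ∧ f K ≤ f K₀} := by
    intro t
    refine ⟨hmem t, ?_⟩
    have := hmono (Nat.zero_le t)
    simpa [hseq0] using this
  haveI : FirstCountableTopology (Matrix (Fin d) (Fin e) ℝ) :=
    inferInstanceAs (FirstCountableTopology (Fin d → Fin e → ℝ))
  obtain ⟨Kbar, hKbarS, φe, hφemono, hφetends⟩ := (hcpt (f K₀)).tendsto_subseq hin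
  have hKbar𝒦 : Kbar ∈ 𝒦 := hKbarS.1
  have hfKbar : f Kbar = Jstar := by
    have h1 : Tendsto (fun k => f (seq (φe k))) atTop (𝓝 (f Kbar)) :=
      (hfcont Kbar hKbar𝒦).tendsto.comp hφetends
    have h2 : Tendsto (fun k => f (seq (φe k))) atTop (𝓝 Jstar) :=
      htends.comp hφemono.tendsto_atTop
    exact tendsto_nhds_unique h1 h2
  -- the limit is the infimum
  have hmain : Jstar = sInf ((fun K => f K) '' (𝒦 : Set (Matrix (Fin d) (Fin e) ℝ))) := by
    by_cases hstat : proj (g Kbar) = 0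
    · have hmin := hUS Kbar hKbar𝒦 hstat
      have hbdd : BddBelow ((fun K => f K) '' (𝒦 : Set (Matrix (Fin d) (Fin e) ℝ))) :=
        ⟨0, fun x ⟨K, _, hx⟩ => hx ▸ hf0 K⟩
      refine le_antisymm ?_ ?_
      · refine le_csInf ⟨f K₀, ⟨K₀, hK₀, rfl⟩⟩ ?_
        rintro b ⟨K, hK, rfl⟩
        rw [← hfKbar]
        exact hmin K hK
      · rw [← hfKbar]
        exact csInf_le hbdd ⟨Kbar, hKbar𝒦, rfl⟩
    · exfalso
      obtain ⟨s₀, hs₀mem, hs₀lt⟩ := hstrict Kbar hKbar𝒦 hstat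
      set Φ : Matrix (Fin d) (Fin e) ℝ → ℝ := fun K => f (K - s₀ • proj (g K)) with hΦdef
      have hgcont : ContinuousAt g Kbar := by
        have hfC1 : ContDiffOn ℝ 1 f U := fun x hx => (hsmooth x hx).contDiffWithinAt
        have hfd' : ContinuousOn (fderiv ℝ f) U :=
          hfC1.continuousOn_fderiv_of_isOpen hUopen le_rfl
        have hU𝓝 : U ∈ 𝓝 Kbar := hUopen.mem_nhds (hKU hKbar𝒦)
        have h1 : ContinuousOn
            (fun K => Matrix.of fun i j => fderiv ℝ f K (Matrix.single i j 1)) U := by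
          apply continuousOn_pi.mpr
          intro i
          apply continuousOn_pi.mpr
          intro j
          exact (ContinuousLinearMap.apply ℝ ℝ
            (Matrix.single i j (1:ℝ))).continuous.comp_continuousOn hfd'
        have h2 : ContinuousOn g U := h1.congr (fun K hK => hg K hK)
        exact h2.continuousAt hU𝓝
      have hΦcont : ContinuousAt Φ Kbar := by
        have hinner : ContinuousAt (fun K => K - s₀ • proj (g K)) Kbar :=
          continuousAt_id.sub ((hprojcont.continuousAt.comp hgcont).const_smul s₀)
        exact ContinuousAt.comp (f := fun K => K - s₀ • proj (g K))
          (hfcont _ (hstep_mem Kbar hKbar𝒦 s₀)) hinner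
      have hΦlim : Tendsto (fun k => Φ (seq (φe k))) atTop (𝓝 (Φ Kbar)) :=
        hΦcont.tendsto.comp hφetends
      have hΦge : ∀ t, Jstar ≤ Φ (seq t) := by
        intro t
        have h1 : f (seq (t + 1)) ≤ Φ (seq t) := by
          rw [hseqS]
          exact hpick3 (seq t) (hmem t) s₀ hs₀mem
        exact le_trans (hJle (t + 1)) h1
      have h2 : Jstar ≤ Φ Kbar := ge_of_tendsto hΦlim
        (Filter.Eventually.of_forall fun k => hΦge (φe k))
      have h3 : Φ Kbar < Jstar := by
        rw [hΦdef]
        simp only []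
        rw [hfKbar] at hs₀lt
        exact hs₀lt
      linarith
  -- conclusion
  refine ⟨fun t => pick (seq t), fun t => hpick1 (seq t), ?_⟩
  intro Kseq hKseq0 hKseqS
  have hKeq : ∀ t, Kseq t = seq t := by
    intro t
    induction t with
    | zero => rw [hKseq0, hseq0]
    | succ t ih =>
      rw [hKseqS, ih, hseqS]
  constructor
  · intro t
    rw [hKeq t]
    exact hmem t
  · have : (fun t => f (Kseq t)) = fun t => f (seq t) := by
      funext t
      rw [hKeq t]
    rw [this, ← hmain]
    exact htends

end Abstract

section Bridge
attribute [local instance] Matrix.normedAddCommGroup Matrix.normedSpace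

lemma gradJ_eq {nn mm pp : ℕ}
    (P11 : Matrix (Fin nn) (Fin nn) ℝ) (P12 : Matrix (Fin nn) (Fin mm) ℝ)
    (C : Matrix (Fin pp) (Fin nn) ℝ)
    (Msq Swsq : Matrix (Fin nn) (Fin nn) ℝ)
    (Rsq : Matrix (Fin mm) (Fin mm) ℝ) (Svsq : Matrix (Fin pp) (Fin pp) ℝ)
    (μ : Fin nn → ℝ) {K : Matrix (Fin mm) (Fin pp) ℝ}
    (h1 : ((1 : Matrix (Fin nn) (Fin nn) ℝ) - P12 * K * C).det ≠ 0)
    (h2 : ((1 : Matrix (Fin pp) (Fin pp) ℝ) - C * P12 * K).det ≠ 0) :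
    gradJ P11 P12 C Msq Swsq Rsq Svsq μ K = Matrix.of fun i j =>
      fderiv ℝ (Jcost P11 P12 C Msq Swsq Rsq Svsq μ) K (Matrix.single i j (1 : ℝ)) := by
  ext i j
  simp only [gradJ, Matrix.of_apply]
  set E := Matrix.single i j (1 : ℝ)
  have hdiff : DifferentiableAt ℝ (Jcost P11 P12 C Msq Swsq Rsq Svsq μ) K :=
    (contDiffAt_Jcost P11 P12 C Msq Swsq Rsq Svsq μ (n := 1) h1 h2).differentiableAt (by norm_num)
  have hline : HasDerivAt (fun t : ℝ => K + t • E) E 0 := by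
    have h3 : HasDerivAt (fun t : ℝ => t • E) ((1 : ℝ) • E) 0 :=
      (hasDerivAt_id (0 : ℝ)).smul_const E
    rw [one_smul] at h3
    exact h3.const_add K
  have hl : HasFDerivAt (Jcost P11 P12 C Msq Swsq Rsq Svsq μ)
      (fderiv ℝ (Jcost P11 P12 C Msq Swsq Rsq Svsq μ) K) ((fun t : ℝ => K + t • E) 0) := by
    simpa using hdiff.hasFDerivAt
  exact (hl.comp_hasDerivAt 0 hline).deriv

end Bridge

/-- **projected gradient descent solves US problems globally.** Let `𝒦` be a
subspace with `K·G` nilpotent on `𝒦` (`G = C·P12`), let `Π_𝒦` be the orthogonal projection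
onto `𝒦` with respect to the Frobenius inner product, and suppose `min_{K ∈ 𝒦} J(K)` is
uniquely stationary (every stationary point is a global minimizer). Then for any `K₀ ∈ 𝒦`
there exist positive step sizes `η_t` such that the iterates
`K_{t+1} = K_t − η_t·Π_𝒦(∇J(K_t))` stay in `𝒦` and `J(K_t) → inf {J(K) : K ∈ 𝒦}`. -/
theorem projected_gradient_descent_US {n m p N : ℕ}
    (hn : 0 < n) (hm : 0 < m) (hp : 0 < p) (hN : 0 < N)
    (P11 : Matrix (Fin (n * (N + 1))) (Fin (n * (N + 1))) ℝ)
    (P12 : Matrix (Fin (n * (N + 1))) (Fin (m * N)) ℝ)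
    (C : Matrix (Fin (p * N)) (Fin (n * (N + 1))) ℝ)
    {M W : Matrix (Fin (n * (N + 1))) (Fin (n * (N + 1))) ℝ}
    {R : Matrix (Fin (m * N)) (Fin (m * N)) ℝ}
    {V : Matrix (Fin (p * N)) (Fin (p * N)) ℝ}
    (hM : M.PosSemidef) (hW : W.PosSemidef) (hR : R.PosDef) (hV : V.PosDef)
    (μ : Fin (n * (N + 1)) → ℝ)
    (G : Matrix (Fin (p * N)) (Fin (m * N)) ℝ) (hG : G = C * P12)
    (𝒦 : Submodule ℝ (Matrix (Fin (m * N)) (Fin (p * N)) ℝ))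
    (hnilp : ∀ K ∈ 𝒦, IsNilpotent (K * G))
    -- `proj` is the orthogonal projection onto `𝒦` w.r.t. the Frobenius inner product:
    (proj : Matrix (Fin (m * N)) (Fin (p * N)) ℝ →ₗ[ℝ] Matrix (Fin (m * N)) (Fin (p * N)) ℝ)
    (hprojmem : ∀ X, proj X ∈ 𝒦)
    (hprojfix : ∀ X ∈ 𝒦, proj X = X)
    (hprojorth : ∀ X, ∀ D ∈ 𝒦, ∑ i, ∑ j, (X - proj X) i j * D i j = 0)
    -- unique stationarity: every stationary point of `J` on `𝒦` is a global minimizer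
    (hUS : ∀ Kbar ∈ 𝒦,
      proj (gradJ P11 P12 C hM.sqrt hW.sqrt hR.posSemidef.sqrt hV.posSemidef.sqrt μ Kbar) = 0 →
      ∀ K ∈ 𝒦,
        Jcost P11 P12 C hM.sqrt hW.sqrt hR.posSemidef.sqrt hV.posSemidef.sqrt μ Kbar ≤
        Jcost P11 P12 C hM.sqrt hW.sqrt hR.posSemidef.sqrt hV.posSemidef.sqrt μ K)
    (K₀ : Matrix (Fin (m * N)) (Fin (p * N)) ℝ) (hK₀ : K₀ ∈ 𝒦) :
    ∃ η : ℕ → ℝ, (∀ t, 0 < η t) ∧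
      ∀ Kseq : ℕ → Matrix (Fin (m * N)) (Fin (p * N)) ℝ,
        Kseq 0 = K₀ →
        (∀ t, Kseq (t + 1) = Kseq t - η t •
          proj (gradJ P11 P12 C hM.sqrt hW.sqrt hR.posSemidef.sqrt hV.posSemidef.sqrt μ
            (Kseq t))) →
        (∀ t, Kseq t ∈ 𝒦) ∧
        Filter.Tendsto
          (fun t => Jcost P11 P12 C hM.sqrt hW.sqrt hR.posSemidef.sqrt hV.posSemidef.sqrt μ
            (Kseq t))
          Filter.atTop
          (nhds (sInf ((fun K =>
            Jcost P11 P12 C hM.sqrt hW.sqrt hR.posSemidef.sqrt hV.posSemidef.sqrt μ K) ''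
            (𝒦 : Set (Matrix (Fin (m * N)) (Fin (p * N)) ℝ))))) := by
  subst hG
  set Msq := hM.sqrt
  set Swsq := hW.sqrt
  set Rsq := hR.posSemidef.sqrt with hRsq
  set Svsq := hV.posSemidef.sqrt with hSvsq
  set f := Jcost P11 P12 C Msq Swsq Rsq Svsq μ with hfdef
  set g := gradJ P11 P12 C Msq Swsq Rsq Svsq μ with hgdef
  -- the open set of invertibility
  set U : Set (Matrix (Fin (m * N)) (Fin (p * N)) ℝ) :=
    {K | ((1 : Matrix (Fin (n * (N + 1))) (Fin (n * (N + 1))) ℝ) - P12 * K * C).det ≠ 0 ∧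
      ((1 : Matrix (Fin (p * N)) (Fin (p * N)) ℝ) - C * P12 * K).det ≠ 0} with hUdef
  have hUopen : IsOpen U := by
    have hc1 : Continuous fun K : Matrix (Fin (m * N)) (Fin (p * N)) ℝ =>
        ((1 : Matrix (Fin (n * (N + 1))) (Fin (n * (N + 1))) ℝ) - P12 * K * C).det :=
      (continuous_const.sub ((continuous_const.matrix_mul continuous_id).matrix_mul
        continuous_const)).matrix_det
    have hc2 : Continuous fun K : Matrix (Fin (m * N)) (Fin (p * N)) ℝ =>
        ((1 : Matrix (Fin (p * N)) (Fin (p * N)) ℝ) - C * P12 * K).det :=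
      (continuous_const.sub ((continuous_const.matrix_mul continuous_const).matrix_mul
        continuous_id)).matrix_det
    have h1 : IsOpen {K : Matrix (Fin (m * N)) (Fin (p * N)) ℝ |
        ((1 : Matrix (Fin (n * (N + 1))) (Fin (n * (N + 1))) ℝ) - P12 * K * C).det ≠ 0} :=
      isOpen_compl_singleton.preimage hc1
    have h2 : IsOpen {K : Matrix (Fin (m * N)) (Fin (p * N)) ℝ |
        ((1 : Matrix (Fin (p * N)) (Fin (p * N)) ℝ) - C * P12 * K).det ≠ 0} :=
      isOpen_compl_singleton.preimage hc2
    exact h1.inter h2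
  have hKU : (𝒦 : Set (Matrix (Fin (m * N)) (Fin (p * N)) ℝ)) ⊆ U := by
    intro K hK
    have h1 : IsNilpotent ((K * C) * P12) := by
      have := hnilp K hK
      rwa [← Matrix.mul_assoc] at this
    constructor
    · have h2 : IsNilpotent (P12 * (K * C)) := isNilpotent_swap' h1
      rw [← Matrix.mul_assoc] at h2
      exact det_one_sub_ne_zero' h2
    · have h2 : IsNilpotent ((C * P12) * K) := isNilpotent_swap' (hnilp K hK)
      exact det_one_sub_ne_zero' h2
  -- determinants of the square roots
  have hRdet : IsUnit Rsq.det := posDef_sqrt_det_isUnit hR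
  have hSdet : IsUnit Svsq.det := posDef_sqrt_det_isUnit hV
  exact pgd_abstract f g 𝒦 U hUopen hKU
    (fun K hK => contDiffAt_Jcost P11 P12 C Msq Swsq Rsq Svsq μ (n := 1) hK.1 hK.2)
    (fun K hK => gradJ_eq P11 P12 C Msq Swsq Rsq Svsq μ hK.1 hK.2)
    (Jcost_nonneg P11 P12 C Msq Swsq Rsq Svsq μ)
    (isCompact_sublevel P11 P12 C Msq Swsq Rsq Svsq μ hRdet hSdet 𝒦 hnilp)
    proj hprojmem hprojorth hUS K₀ hK₀
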